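/- arXiv:hep-ph/9507457 — 7 statements merged into one kernel-verified Lean document; each statement's English description precedes it below -/
import Mathlib

section
/- Let V be a nonzero finite-dimensional real inner product space and ρ a representation of a group G on V such that the only ρ-invariant subspaces of V are 0 and V. If T : V → V is a self-adjoint linear map (⟪T v, w⟫ = ⟪v, T w⟫ for all v, w) with T ∘ ρ(g) = ρ(g) ∘ T for all g ∈ G, then there exists c ∈ ℝ with T = c · id_V. -/
open scoped RealInnerProductSpace

/-- Schur's lemma for self-adjoint intertwiners.  Let `V` be a nonzero
finite-dimensional real inner product space and `ρ` an irreducible representation of a group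
`G` on `V`.  If `T : V → V` is linear, self-adjoint, and commutes with every `ρ g`,
then `T = c • id` for some real `c`. -/
theorem selfAdjoint_commutant_is_scalar
    {G V : Type*} [Group G] [NormedAddCommGroup V] [InnerProductSpace ℝ V]
    [FiniteDimensional ℝ V] [Nontrivial V]
    (ρ : Representation ℝ G V)
    (hirr : ∀ U : Submodule ℝ V, (∀ g : G, ∀ u ∈ U, ρ g u ∈ U) → U = ⊥ ∨ U = ⊤)
    (T : V →ₗ[ℝ] V)
    (hsa : ∀ v w : V, ⟪T v, w⟫ = ⟪v, T w⟫)
    (hcomm : ∀ g : G, T ∘ₗ ρ g = ρ g ∘ₗ T) :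
    ∃ c : ℝ, T = c • (LinearMap.id : V →ₗ[ℝ] V) := by
  have hsym : T.IsSymmetric := fun v w => hsa v w
  obtain ⟨c, hc⟩ : ∃ c : ℝ, Module.End.HasEigenvalue T c :=
    ⟨_, hsym.hasEigenvalue_iSup_of_finiteDimensional⟩
  refine ⟨c, ?_⟩
  have hinv : ∀ g : G, ∀ u ∈ Module.End.eigenspace T c, ρ g u ∈ Module.End.eigenspace T c := by
    intro g u hu
    rw [Module.End.mem_eigenspace_iff] at hu ⊢
    have := congrArg (fun f => f u) (hcomm g)
    simp only [LinearMap.comp_apply] at this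
    rw [this, hu, map_smul]
  rcases hirr _ hinv with h | h
  · exact absurd h hc
  · ext v
    have : v ∈ Module.End.eigenspace T c := h ▸ Submodule.mem_top
    simpa [Module.End.mem_eigenspace_iff] using this
end

section
/- Let V be a nonzero finite-dimensional real inner product space and ρ an orthogonal representation of a group G on V that is irreducible. If B : V × V → ℝ is a symmetric bilinear form with B(ρ(g)x, ρ(g)y) = B(x, y) for all g ∈ G and x, y ∈ V, then there exists c ∈ ℝ such that B(x, y) = c · ⟪x, y⟫ for all x, y ∈ V. -/
open scoped RealInnerProductSpace

/-- Let `V` be a nonzero finite-dimensional real inner product space and `ρ`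
an orthogonal irreducible representation of a group `G` on `V`.  Any `G`-invariant symmetric
bilinear form `B` on `V` is a real multiple of the inner product. -/
theorem invariant_symmetric_bilinear_is_multiple_of_inner
    {G V : Type*} [Group G] [NormedAddCommGroup V] [InnerProductSpace ℝ V]
    [FiniteDimensional ℝ V] [Nontrivial V]
    (ρ : Representation ℝ G V)
    (horth : ∀ (g : G) (v w : V), ⟪ρ g v, ρ g w⟫ = ⟪v, w⟫)
    (hirr : ∀ U : Submodule ℝ V, (∀ g : G, ∀ u ∈ U, ρ g u ∈ U) → U = ⊥ ∨ U = ⊤)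
    (B : V →ₗ[ℝ] V →ₗ[ℝ] ℝ)
    (hsymm : ∀ x y : V, B x y = B y x)
    (hinv : ∀ (g : G) (x y : V), B (ρ g x) (ρ g y) = B x y) :
    ∃ c : ℝ, ∀ x y : V, B x y = c * ⟪x, y⟫ := by
  -- define T with ⟪T x, y⟫ = B x y
  let T : V →ₗ[ℝ] V :=
    { toFun := fun x => (InnerProductSpace.toDual ℝ V).symm (LinearMap.toContinuousLinearMap (B x))
      map_add' := by
        intro a b
        simp [map_add]
      map_smul' := by
        intro a b
        simp [map_smul] }
  have hT : ∀ x y : V, ⟪T x, y⟫ = B x y := by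
    intro x y
    simp [T, InnerProductSpace.toDual_symm_apply]
  have hTsymm : T.IsSymmetric := by
    intro x y
    rw [hT, real_inner_comm, hT, hsymm]
  -- T commutes with ρ g
  have hcomm : ∀ (g : G) (x : V), T (ρ g x) = ρ g (T x) := by
    intro g x
    apply ext_inner_right ℝ
    intro y
    have h1 : ⟪ρ g (T x), y⟫ = ⟪T x, ρ g⁻¹ y⟫ := by
      conv_rhs => rw [← horth g (T x) (ρ g⁻¹ y)]
      congr 1
      have : ρ g (ρ g⁻¹ y) = y := by
        rw [← Module.End.mul_apply, ← map_mul, mul_inv_cancel, map_one, Module.End.one_apply]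
      rw [this]
    rw [hT, h1, hT]
    have := hinv g x (ρ g⁻¹ y)
    have h2 : ρ g (ρ g⁻¹ y) = y := by
      rw [← Module.End.mul_apply, ← map_mul, mul_inv_cancel, map_one, Module.End.one_apply]
    rw [h2] at this
    exact this
  -- eigenvalue
  obtain ⟨μ, hμ⟩ : ∃ μ : ℝ, Module.End.HasEigenvalue T μ :=
    ⟨_, hTsymm.hasEigenvalue_iSup_of_finiteDimensional⟩
  have hne : Module.End.eigenspace T μ ≠ ⊥ := hμ
  have hinvU : ∀ g : G, ∀ u ∈ Module.End.eigenspace T μ, ρ g u ∈ Module.End.eigenspace T μ := by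
    intro g u hu
    rw [Module.End.mem_eigenspace_iff] at hu ⊢
    rw [hcomm, hu, map_smul]
  rcases hirr _ hinvU with h | h
  · exact absurd h hne
  · refine ⟨μ, fun x y => ?_⟩
    have hx : T x = μ • x := by
      have : x ∈ Module.End.eigenspace T μ := h ▸ Submodule.mem_top
      exact Module.End.mem_eigenspace_iff.mp this
    rw [← hT, hx, real_inner_smul_left]
end

section
/- Let H be a group, V a finite-dimensional real inner product space carrying an orthogonal representation ρ of H, and Φ₀ ∈ V a vector with ρ(h)Φ₀ = Φ₀ for all h ∈ H. Let 𝔤 be a finite-dimensional real inner product space carrying an orthogonal representation Ad of H, and let d : 𝔤 → End(V) be a linear map satisfying ρ(h) ∘ d(X) ∘ ρ(h)⁻¹ = d(Ad(h)X) for all h ∈ H and X ∈ 𝔤. Let 𝔪_i and 𝔪_j be nonzero H-invariant subspaces of 𝔤 on which the restricted representations are irreducible, and assume that either 𝔪_i = 𝔪_j, or 𝔪_i and 𝔪_j are orthogonal and the only H-equivariant linear map from 𝔪_i to 𝔪_j is zero. Then there exist constants λ_i, λ_j ≥ 0 such that ‖d(X)Φ₀‖ = λ_i ‖X‖ for all X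 ∈ 𝔪_i, ‖d(Y)Φ₀‖ = λ_j ‖Y‖ for all Y ∈ 𝔪_j, and ⟪d(X)Φ₀, d(Y)Φ₀⟫ = λ_i λ_j ⟪X, Y⟫ for all X ∈ 𝔪_i and Y ∈ 𝔪_j. -/
open scoped RealInnerProductSpace

section Aux

variable {H 𝔤 : Type*} [Group H]
    [NormedAddCommGroup 𝔤] [InnerProductSpace ℝ 𝔤] [FiniteDimensional ℝ 𝔤]
    (Ad : Representation ℝ H 𝔤)

omit [FiniteDimensional ℝ 𝔤] in
private lemma aux_Ad_inv_cancel (h : H) (v : 𝔤) : Ad h (Ad h⁻¹ v) = v := by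
  have : (Ad h * Ad h⁻¹) v = v := by
    rw [← map_mul, mul_inv_cancel, map_one]; rfl
  simpa [Module.End.mul_apply] using this

private lemma aux_scalar
    (horthAd : ∀ (h : H) (X Y : 𝔤), ⟪Ad h X, Ad h Y⟫ = ⟪X, Y⟫)
    (B : 𝔤 →ₗ[ℝ] 𝔤 →ₗ[ℝ] ℝ)
    (hBsymm : ∀ X Y, B X Y = B Y X)
    (hBinv : ∀ (h : H) (X Y : 𝔤), B (Ad h X) (Ad h Y) = B X Y)
    (W : Submodule ℝ 𝔤) (hne : W ≠ ⊥)
    (hinv : ∀ h, ∀ x ∈ W, Ad h x ∈ W)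
    (hirr : ∀ U : Submodule ℝ 𝔤, U ≤ W → (∀ h : H, ∀ x ∈ U, Ad h x ∈ U) →
      U = ⊥ ∨ U = W) :
    ∃ c : ℝ, ∀ X ∈ W, ∀ Y ∈ W, B X Y = c * ⟪X, Y⟫ := by
  haveI : Nontrivial ↥W := Submodule.nontrivial_iff_ne_bot.mpr hne
  -- Riesz operator
  set Tfun : ↥W → ↥W := fun x =>
    (InnerProductSpace.toDual ℝ ↥W).symm
      (LinearMap.toContinuousLinearMap ((B ↑x).comp W.subtype)) with hTfun
  have key : ∀ x y : ↥W, ⟪Tfun x, y⟫ = B ↑x ↑y := by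
    intro x y
    simp [hTfun, InnerProductSpace.toDual_symm_apply]
  have Tadd : ∀ x y : ↥W, Tfun (x + y) = Tfun x + Tfun y := by
    intro x y
    refine ext_inner_right ℝ fun v => ?_
    rw [key, inner_add_left, key, key]
    simp [map_add]
  have Tsmul : ∀ (c : ℝ) (x : ↥W), Tfun (c • x) = c • Tfun x := by
    intro c x
    refine ext_inner_right ℝ fun v => ?_
    rw [key, inner_smul_left, key]
    simp
  let T : ↥W →ₗ[ℝ] ↥W := ⟨⟨Tfun, Tadd⟩, Tsmul⟩
  have keyT : ∀ x y : ↥W, ⟪T x, y⟫ = B ↑x ↑y := key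
  have hsymm : T.IsSymmetric := by
    intro x y
    rw [keyT, real_inner_comm, keyT, hBsymm]
  -- equivariance
  let A : H → (↥W →ₗ[ℝ] ↥W) := fun h => (Ad h).restrict (hinv h)
  have hAcoe : ∀ (h : H) (x : ↥W), (↑(A h x) : 𝔤) = Ad h ↑x := fun h x => rfl
  have hequiv : ∀ (h : H) (x : ↥W), T (A h x) = A h (T x) := by
    intro h x
    refine ext_inner_right ℝ fun y => ?_
    rw [keyT]
    have h1 : B (↑(A h x)) ↑y = B ↑x (Ad h⁻¹ ↑y) := by
      rw [hAcoe, ← hBinv h ↑x (Ad h⁻¹ ↑y), aux_Ad_inv_cancel]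
    have h2 : ⟪(A h (T x)), y⟫ = ⟪(↑(A h (T x)) : 𝔤), (↑y : 𝔤)⟫ := rfl
    rw [h1, h2, hAcoe]
    have h3 : ⟪Ad h ↑(T x), (↑y : 𝔤)⟫ = ⟪(↑(T x) : 𝔤), Ad h⁻¹ ↑y⟫ := by
      conv_lhs => rw [← aux_Ad_inv_cancel Ad h (↑y : 𝔤)]
      rw [horthAd]
    rw [h3]
    have h4 : Ad h⁻¹ (↑y : 𝔤) ∈ W := hinv h⁻¹ _ y.2
    have := keyT x ⟨Ad h⁻¹ ↑y, h4⟩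
    rw [← this]; rfl
  -- eigenvalue
  obtain ⟨c, hc⟩ : ∃ c : ℝ, Module.End.HasEigenvalue T c :=
    ⟨_, hsymm.hasEigenvalue_iSup_of_finiteDimensional⟩
  set E := Module.End.eigenspace T c with hE
  have hEne : E ≠ ⊥ := hc
  set E' := E.map W.subtype with hE'
  have hE'le : E' ≤ W := Submodule.map_subtype_le W E
  have hE'inv : ∀ h : H, ∀ x ∈ E', Ad h x ∈ E' := by
    intro h x hx
    obtain ⟨e, he, rfl⟩ := hx
    refine ⟨A h e, ?_, rfl⟩
    have heT : T e = c • e := (Module.End.mem_eigenspace_iff.mp he)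
    have : T (A h e) = c • (A h e) := by
      rw [hequiv, heT, map_smul]
    exact Module.End.mem_eigenspace_iff.mpr this
  have hE'ne : E' ≠ ⊥ := by
    intro hbot
    apply hEne
    rw [Submodule.eq_bot_iff] at hbot ⊢
    intro e he
    have : (↑e : 𝔤) = 0 := hbot _ ⟨e, he, rfl⟩
    exact Subtype.ext this
  have hE'eq : E' = W := (hirr E' hE'le hE'inv).resolve_left hE'ne
  have hTall : ∀ x : ↥W, T x = c • x := by
    intro x
    have : (↑x : 𝔤) ∈ E' := by rw [hE'eq]; exact x.2
    obtain ⟨e, he, hex⟩ := this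
    have : e = x := Subtype.ext hex
    subst this
    exact Module.End.mem_eigenspace_iff.mp he
  refine ⟨c, fun X hX Y hY => ?_⟩
  have := keyT ⟨X, hX⟩ ⟨Y, hY⟩
  rw [hTall, inner_smul_left] at this
  rw [← this]
  norm_num [Submodule.coe_inner]

private lemma aux_cross
    (horthAd : ∀ (h : H) (X Y : 𝔤), ⟪Ad h X, Ad h Y⟫ = ⟪X, Y⟫)
    (B : 𝔤 →ₗ[ℝ] 𝔤 →ₗ[ℝ] ℝ)
    (hBinv : ∀ (h : H) (X Y : 𝔤), B (Ad h X) (Ad h Y) = B X Y)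
    (𝔪i 𝔪j : Submodule ℝ 𝔤)
    (hinv_i : ∀ (h : H), ∀ x ∈ 𝔪i, Ad h x ∈ 𝔪i)
    (hinv_j : ∀ (h : H), ∀ x ∈ 𝔪j, Ad h x ∈ 𝔪j)
    (hzero : ∀ L : ↥𝔪i →ₗ[ℝ] ↥𝔪j,
       (∀ (h : H) (x : ↥𝔪i),
          (↑(L ⟨Ad h ↑x, hinv_i h ↑x x.2⟩) : 𝔤) = Ad h ↑(L x)) → L = 0) :
    ∀ X ∈ 𝔪i, ∀ Y ∈ 𝔪j, B X Y = 0 := by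
  set Lfun : ↥𝔪i → ↥𝔪j := fun x =>
    (InnerProductSpace.toDual ℝ ↥𝔪j).symm
      (LinearMap.toContinuousLinearMap ((B ↑x).comp 𝔪j.subtype)) with hLfun
  have key : ∀ (x : ↥𝔪i) (y : ↥𝔪j), ⟪Lfun x, y⟫ = B ↑x ↑y := by
    intro x y
    simp [hLfun, InnerProductSpace.toDual_symm_apply]
  have Ladd : ∀ x y : ↥𝔪i, Lfun (x + y) = Lfun x + Lfun y := by
    intro x y
    refine ext_inner_right ℝ fun v => ?_
    rw [key, inner_add_left, key, key]
    simp [map_add]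
  have Lsmul : ∀ (c : ℝ) (x : ↥𝔪i), Lfun (c • x) = c • Lfun x := by
    intro c x
    refine ext_inner_right ℝ fun v => ?_
    rw [key, inner_smul_left, key]
    simp
  let L : ↥𝔪i →ₗ[ℝ] ↥𝔪j := ⟨⟨Lfun, Ladd⟩, Lsmul⟩
  have keyL : ∀ (x : ↥𝔪i) (y : ↥𝔪j), ⟪L x, y⟫ = B ↑x ↑y := key
  have hLequiv : ∀ (h : H) (x : ↥𝔪i),
      (↑(L ⟨Ad h ↑x, hinv_i h ↑x x.2⟩) : 𝔤) = Ad h ↑(L x) := by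
    intro h x
    have hmem : Ad h (↑(L x) : 𝔤) ∈ 𝔪j := hinv_j h _ (L x).2
    have : L ⟨Ad h ↑x, hinv_i h ↑x x.2⟩ = (⟨Ad h ↑(L x), hmem⟩ : ↥𝔪j) := by
      refine ext_inner_right ℝ fun y => ?_
      rw [keyL]
      have h1 : B (Ad h ↑x) ↑y = B ↑x (Ad h⁻¹ ↑y) := by
        rw [← hBinv h ↑x (Ad h⁻¹ ↑y), aux_Ad_inv_cancel]
      have h2 : (⟪(⟨Ad h ↑(L x), hmem⟩ : ↥𝔪j), y⟫ : ℝ)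
          = ⟪Ad h (↑(L x) : 𝔤), (↑y : 𝔤)⟫ := rfl
      rw [h1, h2]
      have h3 : ⟪Ad h (↑(L x) : 𝔤), (↑y : 𝔤)⟫ = ⟪(↑(L x) : 𝔤), Ad h⁻¹ ↑y⟫ := by
        conv_lhs => rw [← aux_Ad_inv_cancel Ad h (↑y : 𝔤)]
        rw [horthAd]
      rw [h3]
      have h4 : Ad h⁻¹ (↑y : 𝔤) ∈ 𝔪j := hinv_j h⁻¹ _ y.2
      have := keyL x ⟨Ad h⁻¹ ↑y, h4⟩
      rw [← this]; rfl
    rw [this]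
  have hL0 : L = 0 := hzero L hLequiv
  intro X hX Y hY
  have := keyL ⟨X, hX⟩ ⟨Y, hY⟩
  rw [hL0] at this
  simpa using this.symm

end Aux

private lemma aux_norm_eq {c a b : ℝ} (hc : 0 ≤ c) (ha : 0 ≤ a) (hb : 0 ≤ b)
    (h : a ^ 2 = c * b ^ 2) : a = Real.sqrt c * b := by
  have : a = Real.sqrt (c * b ^ 2) := by rw [← h, Real.sqrt_sq ha]
  rw [this, Real.sqrt_mul hc, Real.sqrt_sq hb]

/-- Theorem 1 of the paper.  With `ρ` an orthogonal representation of `H`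
on `V` fixing `Φ₀`, `Ad` an orthogonal representation of `H` on `𝔤`, and `d : 𝔤 → End V`
intertwining (`ρ h ∘ d X ∘ ρ h⁻¹ = d (Ad h X)`), for irreducible invariant subspaces
`𝔪i`, `𝔪j` that are either equal, or orthogonal with no nonzero equivariant map between
them, there are constants `λi, λj ≥ 0` with `‖d X Φ₀‖ = λi ‖X‖` on `𝔪i`,
`‖d Y Φ₀‖ = λj ‖Y‖` on `𝔪j`, and `⟪d X Φ₀, d Y Φ₀⟫ = λi λj ⟪X, Y⟫`. -/
theorem inner_of_dPhi_eq_lambda_mul_inner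
    {H V 𝔤 : Type*} [Group H]
    [NormedAddCommGroup V] [InnerProductSpace ℝ V] [FiniteDimensional ℝ V]
    [NormedAddCommGroup 𝔤] [InnerProductSpace ℝ 𝔤] [FiniteDimensional ℝ 𝔤]
    (ρ : Representation ℝ H V)
    (horthV : ∀ (h : H) (v w : V), ⟪ρ h v, ρ h w⟫ = ⟪v, w⟫)
    (Φ₀ : V) (hfix : ∀ h : H, ρ h Φ₀ = Φ₀)
    (Ad : Representation ℝ H 𝔤)
    (horthAd : ∀ (h : H) (X Y : 𝔤), ⟪Ad h X, Ad h Y⟫ = ⟪X, Y⟫)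
    (d : 𝔤 →ₗ[ℝ] (V →ₗ[ℝ] V))
    (hconj : ∀ (h : H) (X : 𝔤) (v : V), ρ h (d X (ρ h⁻¹ v)) = d (Ad h X) v)
    (𝔪i 𝔪j : Submodule ℝ 𝔤)
    (hne_i : 𝔪i ≠ ⊥) (hne_j : 𝔪j ≠ ⊥)
    (hinv_i : ∀ (h : H), ∀ x ∈ 𝔪i, Ad h x ∈ 𝔪i)
    (hinv_j : ∀ (h : H), ∀ x ∈ 𝔪j, Ad h x ∈ 𝔪j)
    (hirr_i : ∀ U : Submodule ℝ 𝔤, U ≤ 𝔪i → (∀ h : H, ∀ x ∈ U, Ad h x ∈ U) →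
      U = ⊥ ∨ U = 𝔪i)
    (hirr_j : ∀ U : Submodule ℝ 𝔤, U ≤ 𝔪j → (∀ h : H, ∀ x ∈ U, Ad h x ∈ U) →
      U = ⊥ ∨ U = 𝔪j)
    (hcase : 𝔪i = 𝔪j ∨
      ((∀ x ∈ 𝔪i, ∀ y ∈ 𝔪j, ⟪x, y⟫ = 0) ∧
       ∀ L : ↥𝔪i →ₗ[ℝ] ↥𝔪j,
         (∀ (h : H) (x : ↥𝔪i),
            (↑(L ⟨Ad h ↑x, hinv_i h ↑x x.2⟩) : 𝔤) = Ad h ↑(L x)) → L = 0)) :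
    ∃ lami lamj : ℝ, 0 ≤ lami ∧ 0 ≤ lamj ∧
      (∀ X ∈ 𝔪i, ‖d X Φ₀‖ = lami * ‖X‖) ∧
      (∀ Y ∈ 𝔪j, ‖d Y Φ₀‖ = lamj * ‖Y‖) ∧
      (∀ X ∈ 𝔪i, ∀ Y ∈ 𝔪j, ⟪d X Φ₀, d Y Φ₀⟫ = lami * lamj * ⟪X, Y⟫) := by
  -- the bilinear form
  set B : 𝔤 →ₗ[ℝ] 𝔤 →ₗ[ℝ] ℝ := LinearMap.mk₂ ℝ (fun X Y => ⟪d X Φ₀, d Y Φ₀⟫)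
    (fun X X' Y => by simp [inner_add_left])
    (fun c X Y => by simp [inner_smul_left])
    (fun X Y Y' => by simp [inner_add_right])
    (fun c X Y => by simp [inner_smul_right]) with hB
  have hBapp : ∀ X Y, B X Y = ⟪d X Φ₀, d Y Φ₀⟫ := fun _ _ => rfl
  have hd : ∀ (h : H) (X : 𝔤), d (Ad h X) Φ₀ = ρ h (d X Φ₀) := by
    intro h X
    rw [← hconj h X Φ₀, hfix h⁻¹]
  have hBsymm : ∀ X Y, B X Y = B Y X := by
    intro X Y; rw [hBapp, hBapp, real_inner_comm]
  have hBinv : ∀ (h : H) (X Y : 𝔤), B (Ad h X) (Ad h Y) = B X Y := by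
    intro h X Y
    rw [hBapp, hBapp, hd, hd, horthV]
  -- scalar constants
  obtain ⟨ci, hci⟩ := aux_scalar Ad horthAd B hBsymm hBinv 𝔪i hne_i hinv_i hirr_i
  have hcinn : ∀ (c : ℝ) (W : Submodule ℝ 𝔤), W ≠ ⊥ →
      (∀ X ∈ W, ∀ Y ∈ W, B X Y = c * ⟪X, Y⟫) → 0 ≤ c := by
    intro c W hne hc
    obtain ⟨x, hxW, hx0⟩ := Submodule.exists_mem_ne_zero_of_ne_bot hne
    have h1 := hc x hxW x hxW
    rw [hBapp] at h1
    have h2 : (0:ℝ) ≤ ⟪d x Φ₀, d x Φ₀⟫ := real_inner_self_nonneg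
    have hxn : (0:ℝ) < ‖x‖ := norm_pos_iff.mpr hx0
    have h3 : (0:ℝ) < ⟪x, x⟫ := by rw [real_inner_self_eq_norm_sq]; positivity
    nlinarith
  have hci0 : 0 ≤ ci := hcinn ci 𝔪i hne_i hci
  have hnormgen : ∀ (c : ℝ), 0 ≤ c → ∀ (W : Submodule ℝ 𝔤),
      (∀ X ∈ W, ∀ Y ∈ W, B X Y = c * ⟪X, Y⟫) →
      ∀ X ∈ W, ‖d X Φ₀‖ = Real.sqrt c * ‖X‖ := by
    intro c hc0 W hc X hX
    have h1 := hc X hX X hX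
    rw [hBapp, real_inner_self_eq_norm_sq, real_inner_self_eq_norm_sq] at h1
    exact aux_norm_eq hc0 (norm_nonneg _) (norm_nonneg _) h1
  rcases hcase with heq | ⟨horth, hzero⟩
  · subst heq
    refine ⟨Real.sqrt ci, Real.sqrt ci, Real.sqrt_nonneg _, Real.sqrt_nonneg _,
      hnormgen ci hci0 𝔪i hci, hnormgen ci hci0 𝔪i hci, ?_⟩
    intro X hX Y hY
    rw [← hBapp, hci X hX Y hY, Real.mul_self_sqrt hci0]
  · obtain ⟨cj, hcj⟩ := aux_scalar Ad horthAd B hBsymm hBinv 𝔪j hne_j hinv_j hirr_j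
    have hcj0 : 0 ≤ cj := hcinn cj 𝔪j hne_j hcj
    have hcross := aux_cross Ad horthAd B hBinv 𝔪i 𝔪j hinv_i hinv_j hzero
    refine ⟨Real.sqrt ci, Real.sqrt cj, Real.sqrt_nonneg _, Real.sqrt_nonneg _,
      hnormgen ci hci0 𝔪i hci, hnormgen cj hcj0 𝔪j hcj, ?_⟩
    intro X hX Y hY
    rw [← hBapp, hcross X hX Y hY, horth X hX Y hY, mul_zero]
end

section
/- Let 𝔤 be a finite-dimensional real Lie algebra equipped with an ad-invariant inner product, let V be a real inner product space, and let d : 𝔤 → End(V) be a Lie algebra homomorphism such that d(Z) is skew-adjoint for every Z ∈ 𝔤. Fix Φ₀ ∈ V, X ∈ 𝔤, and c ≠ 0 with d(X)(d(X)Φ₀) = −c² Φ₀, and let P be the span of {Φ₀, d(X)Φ₀}. Then the following are equivalent: (i) for every Y ∈ 𝔤 with ⟪Y, X⟫ = 0 and every Φ ∈ P, the vector d(Y)Φ is orthogonal to P; (ii) for every Y ∈ 𝔤 with ⟪Y, X⟫ = 0, ⟪d(X)Φ₀, d(Y)Φ₀⟫ = 0. -/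
open scoped RealInnerProductSpace

/-- Let `𝔤` be a finite-dimensional real Lie algebra (bracket `bra`,
satisfying alternativity and the Leibniz/Jacobi identity) with an ad-invariant inner
product, and `d : 𝔤 → End V` a Lie algebra homomorphism into skew-adjoint endomorphisms of
a real inner product space `V`.  For `Φ₀, X, c ≠ 0` with `d X (d X Φ₀) = −c² Φ₀` and
`P = span {Φ₀, d X Φ₀}`, the following are equivalent: (i) `d Y` maps `P` into `P^⊥` for
every `Y ⊥ X`; (ii) `⟪d X Φ₀, d Y Φ₀⟫ = 0` for every `Y ⊥ X`. -/
theorem embedded_vortex_condition_iff_conformal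
    {𝔤 V : Type*}
    [NormedAddCommGroup 𝔤] [InnerProductSpace ℝ 𝔤] [FiniteDimensional ℝ 𝔤]
    [NormedAddCommGroup V] [InnerProductSpace ℝ V]
    (bra : 𝔤 →ₗ[ℝ] 𝔤 →ₗ[ℝ] 𝔤)
    (halt : ∀ X : 𝔤, bra X X = 0)
    (hjacobi : ∀ X Y Z : 𝔤, bra X (bra Y Z) = bra (bra X Y) Z + bra Y (bra X Z))
    (hadinv : ∀ Z X Y : 𝔤, ⟪bra Z X, Y⟫ + ⟪X, bra Z Y⟫ = 0)
    (d : 𝔤 →ₗ[ℝ] (V →ₗ[ℝ] V))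
    (hhom : ∀ X Y : 𝔤, d (bra X Y) = d X ∘ₗ d Y - d Y ∘ₗ d X)
    (hskew : ∀ (Z : 𝔤) (v w : V), ⟪d Z v, w⟫ = -⟪v, d Z w⟫)
    (Φ₀ : V) (X : 𝔤) (c : ℝ) (hc : c ≠ 0)
    (hXX : d X (d X Φ₀) = -(c ^ 2) • Φ₀)
    (P : Submodule ℝ V) (hP : P = Submodule.span ℝ {Φ₀, d X Φ₀}) :
    (∀ Y : 𝔤, ⟪Y, X⟫ = 0 → ∀ Φ ∈ P, ∀ Ψ ∈ P, ⟪d Y Φ, Ψ⟫ = 0) ↔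
      (∀ Y : 𝔤, ⟪Y, X⟫ = 0 → ⟪d X Φ₀, d Y Φ₀⟫ = 0) := by
  subst hP
  have hself : ∀ (Z : 𝔤) (v : V), ⟪d Z v, v⟫ = 0 := by
    intro Z v
    have h := hskew Z v v
    have h2 := real_inner_comm v ((d Z) v)
    linarith
  constructor
  · intro h Y hY
    have h₁ : Φ₀ ∈ Submodule.span ℝ ({Φ₀, d X Φ₀} : Set V) :=
      Submodule.subset_span (by simp)
    have h₂ : d X Φ₀ ∈ Submodule.span ℝ ({Φ₀, d X Φ₀} : Set V) :=
      Submodule.subset_span (by simp)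
    have := h Y hY Φ₀ h₁ (d X Φ₀) h₂
    rw [real_inner_comm]
    exact this
  · intro h Y hY
    -- key: the four basis inner products vanish
    have key : ∀ v ∈ ({Φ₀, d X Φ₀} : Set V), ∀ w ∈ ({Φ₀, d X Φ₀} : Set V),
        ⟪d Y v, w⟫ = 0 := by
      intro v hv w hw
      have hYX : ⟪d Y (d X Φ₀), Φ₀⟫ = 0 := by
        have hb : d Y (d X Φ₀) = d X (d Y Φ₀) + d (bra Y X) Φ₀ := by
          have := hhom Y X
          have := congrArg (fun T : V →ₗ[ℝ] V => T Φ₀) this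
          simp only [LinearMap.sub_apply, LinearMap.comp_apply] at this
          rw [this]; abel
        rw [hb, inner_add_left, hself (bra Y X) Φ₀, add_zero,
          hskew X (d Y Φ₀) Φ₀, real_inner_comm]
        simp [h Y hY]
      simp only [Set.mem_insert_iff, Set.mem_singleton_iff] at hv hw
      rcases hv with h1 | h1 <;> rcases hw with h2 | h2 <;> subst h1 <;> subst h2 <;>
        first
          | exact hself Y _
          | exact hYX
          | (rw [real_inner_comm]; exact h Y hY)
    intro Φ hΦ Ψ hΨ
    induction hΦ using Submodule.span_induction with
    | mem v hv =>
      induction hΨ using Submodule.span_induction with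
      | mem w hw => exact key v hv w hw
      | zero => simp
      | add w₁ w₂ _ _ ih1 ih2 => rw [inner_add_right, ih1, ih2, add_zero]
      | smul a w _ ih => rw [real_inner_smul_right, ih, mul_zero]
    | zero => simp
    | add v₁ v₂ _ _ ih1 ih2 => rw [map_add, inner_add_left, ih1, ih2, add_zero]
    | smul a v _ ih => rw [map_smul, real_inner_smul_left, ih, mul_zero]
end

section
/- Let 𝔤 be a finite-dimensional real Lie algebra, V a finite-dimensional real normed vector space, and d : 𝔤 → End(V) a Lie algebra homomorphism. Then for all X, Y ∈ 𝔤 and all θ ∈ ℝ, exp(θ · d(X)) ∘ d(Y) ∘ exp(−θ · d(X)) = d( exp(θ · ad X) Y ), where ad X denotes the endomorphism ⁅X, ·⁆ of 𝔤 and exp denotes the exponential of a linear endomorphism of a finite-dimensional real vector space (the convergent power series Σ Tⁿ/n!). -/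
set_option synthInstance.maxHeartbeats 1000000
set_option maxHeartbeats 1000000

open NormedSpace

section Aux

variable {E F : Type*} [NormedAddCommGroup E] [NormedSpace ℝ E] [CompleteSpace E]
  [NormedAddCommGroup F] [NormedSpace ℝ F] [CompleteSpace F]

theorem exp_clm_apply (g : E →L[ℝ] E) (x : E) :
    exp g x = ∑' n : ℕ, ((n.factorial : ℝ))⁻¹ • (g ^ n) x := by
  rw [exp_eq_tsum (𝕂 := ℝ)]
  have h := (ContinuousLinearMap.apply ℝ E x).map_tsum
    (expSeries_summable' (𝕂 := ℝ) g)
  simpa using h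

theorem summable_exp_apply (g : E →L[ℝ] E) (x : E) :
    Summable fun n : ℕ => ((n.factorial : ℝ))⁻¹ • (g ^ n) x := by
  have h := ((expSeries_summable' (𝕂 := ℝ) g)).map
    (ContinuousLinearMap.apply ℝ E x) (ContinuousLinearMap.apply ℝ E x).continuous
  exact h

theorem exp_intertwine (f : E →L[ℝ] F) (g : E →L[ℝ] E) (h : F →L[ℝ] F)
    (hc : ∀ x, f (g x) = h (f x)) (x : E) :
    f (exp g x) = exp h (f x) := by
  have hpow : ∀ (n : ℕ) (x : E), f ((g ^ n) x) = (h ^ n) (f x) := by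
    intro n
    induction n with
    | zero => simp
    | succ n ih =>
      intro x
      rw [pow_succ', pow_succ', ContinuousLinearMap.mul_apply,
        ContinuousLinearMap.mul_apply, ← ih, hc]
  rw [exp_clm_apply, exp_clm_apply, f.map_tsum (summable_exp_apply g x)]
  simp_rw [f.map_smul, hpow]

variable {𝔸 : Type*} [NormedRing 𝔸] [NormedAlgebra ℝ 𝔸] [CompleteSpace 𝔸]

omit [CompleteSpace 𝔸] in
theorem mul_pow_apply (a b : 𝔸) (n : ℕ) :
    ((ContinuousLinearMap.mul ℝ 𝔸 a) ^ n) b = a ^ n * b := by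
  induction n with
  | zero => simp
  | succ n ih =>
    rw [pow_succ', ContinuousLinearMap.mul_apply, ContinuousLinearMap.mul_apply',
      pow_succ', mul_assoc, ← ih]

omit [CompleteSpace 𝔸] in
theorem flip_pow_apply (a b : 𝔸) (n : ℕ) :
    (((ContinuousLinearMap.mul ℝ 𝔸).flip a) ^ n) b = b * a ^ n := by
  induction n generalizing b with
  | zero => simp
  | succ n ih =>
    rw [pow_succ, ContinuousLinearMap.mul_apply, ContinuousLinearMap.flip_apply,
      ContinuousLinearMap.mul_apply', ih, pow_succ', ← mul_assoc]

theorem exp_mulLeft_apply (a b : 𝔸) :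
    exp (ContinuousLinearMap.mul ℝ 𝔸 a) b = exp a * b := by
  have h := (((ContinuousLinearMap.mul ℝ 𝔸).flip) b).map_tsum
    (expSeries_summable' (𝕂 := ℝ) a)
  simp only [map_smul, ContinuousLinearMap.flip_apply,
    ContinuousLinearMap.mul_apply'] at h
  rw [exp_clm_apply]
  simp only [mul_pow_apply]
  rw [← h]
  simp [exp_eq_tsum (𝕂 := ℝ)]

theorem exp_mulRight_apply (a b : 𝔸) :
    exp ((ContinuousLinearMap.mul ℝ 𝔸).flip a) b = b * exp a := by
  have h := ((ContinuousLinearMap.mul ℝ 𝔸) b).map_tsum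
    (expSeries_summable' (𝕂 := ℝ) a)
  simp only [map_smul, ContinuousLinearMap.mul_apply'] at h
  rw [exp_clm_apply]
  simp only [flip_pow_apply]
  rw [← h]
  simp [exp_eq_tsum (𝕂 := ℝ)]

omit [CompleteSpace 𝔸] in
theorem commute_mul_flip (a c : 𝔸) :
    Commute (ContinuousLinearMap.mul ℝ 𝔸 a) ((ContinuousLinearMap.mul ℝ 𝔸).flip c) := by
  ext x
  simp [ContinuousLinearMap.mul_apply, mul_assoc]

end Aux

/-- For a Lie algebra homomorphism `d : 𝔤 → End V` (with `𝔤` a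
finite-dimensional real Lie algebra, bracket `bra`, and `V` a finite-dimensional real
normed space), one has `exp(θ d X) ∘ d Y ∘ exp(−θ d X) = d (exp(θ ad X) Y)` for all
`X, Y ∈ 𝔤` and `θ ∈ ℝ`, where `ad X = ⁅X, ·⁆`. -/
theorem exp_conj_d_eq_d_exp_ad
    {𝔤 V : Type*}
    [NormedAddCommGroup 𝔤] [NormedSpace ℝ 𝔤] [FiniteDimensional ℝ 𝔤]
    [NormedAddCommGroup V] [NormedSpace ℝ V] [FiniteDimensional ℝ V]
    (bra : 𝔤 →ₗ[ℝ] 𝔤 →ₗ[ℝ] 𝔤)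
    (halt : ∀ X : 𝔤, bra X X = 0)
    (hjacobi : ∀ X Y Z : 𝔤, bra X (bra Y Z) = bra (bra X Y) Z + bra Y (bra X Z))
    (d : 𝔤 →ₗ[ℝ] (V →L[ℝ] V))
    (hhom : ∀ X Y : 𝔤, d (bra X Y) = d X * d Y - d Y * d X) :
    ∀ (X Y : 𝔤) (θ : ℝ),
      exp (θ • d X) * d Y * exp (-θ • d X) =
        d (exp (θ • (bra X).toContinuousLinearMap) Y) := by
  intro X Y θ
  have key := exp_intertwine (LinearMap.toContinuousLinearMap d)
    (θ • (bra X).toContinuousLinearMap)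
    (ContinuousLinearMap.mul ℝ (V →L[ℝ] V) (θ • d X)
      + (ContinuousLinearMap.mul ℝ (V →L[ℝ] V)).flip (-(θ • d X))) ?_ Y
  · simp only [LinearMap.coe_toContinuousLinearMap'] at key
    letI : NormedAlgebra ℚ ((V →L[ℝ] V) →L[ℝ] V →L[ℝ] V) := .restrictScalars ℚ ℝ _
    rw [key, exp_add_of_commute (commute_mul_flip _ _), ContinuousLinearMap.mul_apply,
      exp_mulRight_apply, exp_mulLeft_apply, neg_smul, mul_assoc]
  · intro Z
    simp only [LinearMap.coe_toContinuousLinearMap', ContinuousLinearMap.smul_apply,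
      ContinuousLinearMap.add_apply, ContinuousLinearMap.mul_apply',
      ContinuousLinearMap.flip_apply, LinearMap.coe_toContinuousLinearMap,
      map_smul, hhom]
    simp [smul_sub, smul_mul_assoc, mul_smul_comm, sub_eq_add_neg, mul_neg]
end

section
/- Let 𝔤 be a finite-dimensional real Lie algebra equipped with an ad-invariant inner product, let V be a finite-dimensional real inner product space, and let d : 𝔤 → End(V) be a Lie algebra homomorphism such that d(Z) is skew-adjoint for every Z ∈ 𝔤. Fix Φ₀ ∈ V and X ∈ 𝔤, and suppose ⟪d(X)Φ₀, d(Y)Φ₀⟫ = 0 for every Y ∈ 𝔤 with ⟪Y, X⟫ = 0. Then for every θ ∈ ℝ, setting Φ_θ = exp(θ · d(X))Φ₀, one has ⟪d(X)Φ_θ, d(Y)Φ_θ⟫ = 0 for every Y ∈ 𝔤 with ⟪Y, X⟫ = 0. -/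
open NormedSpace
open scoped RealInnerProductSpace

/-- Let `𝔤` be a finite-dimensional real Lie algebra (bracket `bra`) with
an ad-invariant inner product, `V` a finite-dimensional real inner product space, and
`d : 𝔤 → End V` a Lie algebra homomorphism into skew-adjoint endomorphisms.  If
`⟪d X Φ₀, d Y Φ₀⟫ = 0` for all `Y ⊥ X`, then for every `θ`, with `Φ_θ = exp(θ d X) Φ₀`,
also `⟪d X Φ_θ, d Y Φ_θ⟫ = 0` for all `Y ⊥ X`. -/
theorem vortex_orthogonality_propagates_along_orbit
    {𝔤 V : Type*}
    [NormedAddCommGroup 𝔤] [InnerProductSpace ℝ 𝔤] [FiniteDimensional ℝ 𝔤]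
    [NormedAddCommGroup V] [InnerProductSpace ℝ V] [FiniteDimensional ℝ V]
    (bra : 𝔤 →ₗ[ℝ] 𝔤 →ₗ[ℝ] 𝔤)
    (halt : ∀ X : 𝔤, bra X X = 0)
    (hjacobi : ∀ X Y Z : 𝔤, bra X (bra Y Z) = bra (bra X Y) Z + bra Y (bra X Z))
    (hadinv : ∀ Z X Y : 𝔤, ⟪bra Z X, Y⟫ + ⟪X, bra Z Y⟫ = 0)
    (d : 𝔤 →ₗ[ℝ] (V →L[ℝ] V))
    (hhom : ∀ X Y : 𝔤, d (bra X Y) = d X * d Y - d Y * d X)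
    (hskew : ∀ (Z : 𝔤) (v w : V), ⟪d Z v, w⟫ = -⟪v, d Z w⟫)
    (Φ₀ : V) (X : 𝔤)
    (h0 : ∀ Y : 𝔤, ⟪Y, X⟫ = 0 → ⟪d X Φ₀, d Y Φ₀⟫ = 0) :
    ∀ θ : ℝ, ∀ Y : 𝔤, ⟪Y, X⟫ = 0 →
      ⟪d X (exp (θ • d X) Φ₀), d Y (exp (θ • d X) Φ₀)⟫ = 0 := by
  intro θ Y hY
  set A : V →L[ℝ] V := d X with hA
  set B : 𝔤 →L[ℝ] 𝔤 := LinearMap.toContinuousLinearMap (bra X) with hB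
  have hBapp : ∀ z : 𝔤, B z = bra X z := fun z => rfl
  -- `bra X` maps everything into the orthogonal complement of `X`
  have hkey : ∀ z : 𝔤, ⟪(B z : 𝔤), X⟫ = 0 := by
    intro z
    have := hadinv X z X
    rw [halt X] at this
    simpa [hBapp] using this
  -- applying exp to a vector, as a sum
  have happly : ∀ (T : 𝔤 →L[ℝ] 𝔤) (w : 𝔤),
      exp T w = ∑' n : ℕ, (n.factorial⁻¹ : ℝ) • (T ^ n) w := by
    intro T w
    rw [exp_eq_tsum ℝ]
    have hs : Summable fun n : ℕ => (n.factorial⁻¹ : ℝ) • T ^ n :=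
      expSeries_summable' (𝕂 := ℝ) T
    have := (ContinuousLinearMap.apply ℝ 𝔤 w).map_tsum hs
    simpa using this
  -- exp of a multiple of B preserves the orthogonal complement of X
  have horth : ∀ (t : ℝ) (W : 𝔤), ⟪W, X⟫ = 0 → ⟪exp (t • B) W, X⟫ = 0 := by
    intro t W hW
    rw [happly]
    have hs : Summable fun n : ℕ => (n.factorial⁻¹ : ℝ) • ((t • B) ^ n) W := by
      have hs0 : Summable fun n : ℕ => (n.factorial⁻¹ : ℝ) • (t • B) ^ n :=
        expSeries_summable' (𝕂 := ℝ) (t • B)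
      have := hs0.map (ContinuousLinearMap.apply ℝ 𝔤 W)
        (ContinuousLinearMap.apply ℝ 𝔤 W).continuous
      simpa only [Function.comp_def, ContinuousLinearMap.apply_apply,
        ContinuousLinearMap.smul_apply] using this
    have hmap := (innerSL ℝ X).map_tsum hs
    have hterm : ∀ n : ℕ, (innerSL ℝ X) ((n.factorial⁻¹ : ℝ) • ((t • B) ^ n) W) = 0 := by
      intro n
      cases n with
      | zero =>
        simp only [pow_zero, ContinuousLinearMap.one_apply, map_smul, smul_eq_mul,
          innerSL_apply_apply]
        rw [real_inner_comm]
        rw [hW, mul_zero]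
      | succ m =>
        have : ((t • B) ^ (m + 1)) W = (t • B) (((t • B) ^ m) W) := by
          rw [pow_succ']; rfl
        rw [this]
        have h1 : ⟪(t • B) (((t • B) ^ m) W), X⟫ = 0 := by
          have := hkey (((t • B) ^ m) W)
          simp only [ContinuousLinearMap.smul_apply]
          rw [real_inner_smul_left, this, mul_zero]
        simp only [map_smul, smul_eq_mul, innerSL_apply_apply]
        rw [real_inner_comm] at h1
        rw [h1, mul_zero]
    rw [real_inner_comm, ← innerSL_apply_apply (𝕜 := ℝ), hmap, tsum_congr hterm, tsum_zero]
  -- the vector Z transported back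
  set Z : 𝔤 := exp ((-θ) • B) Y with hZdef
  have hZ : ⟪Z, X⟫ = 0 := horth _ _ hY
  have hYZ : exp (θ • B) Z = Y := by
    have hcomm : Commute (θ • B) (-(θ • B)) := (Commute.refl _).neg_right
    have hmul : exp (θ • B) * exp (-(θ • B)) = 1 := by
      rw [← exp_add_of_commute_of_mem_ball (𝕂 := ℝ) hcomm
        ((expSeries_radius_eq_top ℝ (𝔤 →L[ℝ] 𝔤)).symm ▸ edist_lt_top _ _)
        ((expSeries_radius_eq_top ℝ (𝔤 →L[ℝ] 𝔤)).symm ▸ edist_lt_top _ _), add_neg_cancel, exp_zero]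
    have hZeq : Z = exp (-(θ • B)) Y := by rw [hZdef, neg_smul]
    rw [hZeq, ← ContinuousLinearMap.mul_apply, hmul, ContinuousLinearMap.one_apply]
  -- the function f, constant in t
  set D : 𝔤 →L[ℝ] (V →L[ℝ] V) := LinearMap.toContinuousLinearMap d with hD
  have hDapp : ∀ z : 𝔤, D z = d z := fun z => rfl
  set u : ℝ → V := fun t => exp (t • A) Φ₀ with hu
  set w : ℝ → 𝔤 := fun t => exp (t • B) Z with hw
  set f : ℝ → ℝ := fun t => ⟪A (u t), (D (w t)) (u t)⟫ with hf
  have hu' : ∀ t : ℝ, HasDerivAt u (A (u t)) t := by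
    intro t
    have h1 := hasDerivAt_exp_smul_const' (𝕂 := ℝ) A t
    have h2 := h1.clm_apply (hasDerivAt_const t Φ₀)
    simpa [hu] using h2
  have hw' : ∀ t : ℝ, HasDerivAt w (B (w t)) t := by
    intro t
    have h1 := hasDerivAt_exp_smul_const' (𝕂 := ℝ) B t
    have h2 := h1.clm_apply (hasDerivAt_const t Z)
    simpa [hw] using h2
  have hderiv : ∀ t : ℝ, HasDerivAt f 0 t := by
    intro t
    -- left factor: t ↦ A (u t)
    have hp : HasDerivAt (fun t => A (u t)) (A (A (u t))) t :=
      A.hasFDerivAt.comp_hasDerivAt t (hu' t)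
    -- CLM-valued: t ↦ D (w t)
    have hc : HasDerivAt (fun t => D (w t)) (D (B (w t))) t :=
      D.hasFDerivAt.comp_hasDerivAt t (hw' t)
    -- right factor: t ↦ D (w t) (u t)
    have hq : HasDerivAt (fun t => (D (w t)) (u t))
        ((D (B (w t))) (u t) + (D (w t)) (A (u t))) t := hc.clm_apply (hu' t)
    have h := (hp.inner ℝ hq)
    have hz : (⟪A (u t), (D (B (w t))) (u t) + (D (w t)) (A (u t))⟫
        + ⟪A (A (u t)), (D (w t)) (u t)⟫ : ℝ) = 0 := by
      have hbr : D (B (w t)) = A * D (w t) - D (w t) * A := by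
        rw [hDapp, hBapp, hhom X (w t), hDapp, hA]
      rw [hbr]
      have hexpand : ((A * D (w t) - D (w t) * A) : V →L[ℝ] V) (u t)
          = A ((D (w t)) (u t)) - (D (w t)) (A (u t)) := rfl
      rw [hexpand]
      have hsk : ⟪A (A (u t)), (D (w t)) (u t)⟫ = -⟪A (u t), A ((D (w t)) (u t))⟫ := by
        have := hskew X (A (u t)) ((D (w t)) (u t))
        simpa [hA] using this
      rw [hsk]
      rw [sub_add_cancel]
      ring
    simpa [f, hz] using h
  have hconst : f θ = f 0 := by
    have hdiff : Differentiable ℝ f := fun t => (hderiv t).differentiableAt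
    exact is_const_of_deriv_eq_zero hdiff (fun t => (hderiv t).deriv) θ 0
  have hf0 : f 0 = 0 := by
    have : f 0 = ⟪d X Φ₀, d Z Φ₀⟫ := by
      simp [hf, hu, hw, hDapp, hA, exp_zero]
    rw [this]
    exact h0 Z hZ
  have hfθ : f θ = ⟪d X (exp (θ • d X) Φ₀), d Y (exp (θ • d X) Φ₀)⟫ := by
    simp only [hf, hu, hw, hYZ, hDapp, hA]
  rw [← hfθ, hconst, hf0]
end

section
/- Let a, b, η be real numbers, λ ≥ 0, and let f, g : (0,∞) → ℝ be differentiable functions. Then for every c > 0, E(a, b, λ)(r ↦ f(c r), r ↦ g(c r)) = E(c·a, b, λ/c²)(f, g), where E is the radial vortex energy functional. (This is the scaling identity underlying the relation f_NO(λ, q', n; r) = f_NO(λ (q/q')², q, n; (q'/q) r) between Nielsen–Olesen profile functions at different charges.) -/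
open MeasureTheory Set

/-- The radial vortex energy functional
`E(a,b,λ)(f,g) = ∫₀^∞ [ a²/(4r²) g'² + η²/2 f'² + b²/(2r²) f² (1+g)² + λη⁴(f²−1)² ] r dr`,
an integral over `(0,∞)` of a nonnegative integrand (valued in `[0,∞]`). -/
noncomputable def radialVortexEnergy (η a b lam : ℝ) (f g : ℝ → ℝ) : ENNReal :=
  ∫⁻ r in Set.Ioi (0 : ℝ),
    ENNReal.ofReal ((a ^ 2 / (4 * r ^ 2)) * (deriv g r) ^ 2
      + (η ^ 2 / 2) * (deriv f r) ^ 2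
      + (b ^ 2 / (2 * r ^ 2)) * (f r) ^ 2 * (1 + g r) ^ 2
      + lam * η ^ 4 * ((f r) ^ 2 - 1) ^ 2) * ENNReal.ofReal r

/-- Change of variables `x ↦ c * x` for lower integrals over `(0,∞)`. -/
lemma scale_key (c : ℝ) (hc : 0 < c) (G : ℝ → ENNReal) :
    ∫⁻ x in Set.Ioi (0:ℝ), G (c * x) = ENNReal.ofReal c⁻¹ * ∫⁻ y in Set.Ioi (0:ℝ), G y := by
  have hemb : MeasurableEmbedding (fun x : ℝ => c * x) :=
    (Homeomorph.mulLeft₀ c hc.ne').measurableEmbedding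
  have hind : ∀ x : ℝ, (Set.Ioi (0:ℝ)).indicator (fun x => G (c * x)) x
      = (Set.Ioi (0:ℝ)).indicator G (c * x) := by
    intro x
    by_cases hx : x ∈ Set.Ioi (0:ℝ)
    · rw [Set.indicator_of_mem hx, Set.indicator_of_mem (by exact mul_pos hc hx)]
    · rw [Set.indicator_of_notMem hx, Set.indicator_of_notMem]
      simp only [Set.mem_Ioi, not_lt] at hx ⊢
      exact mul_nonpos_of_nonneg_of_nonpos hc.le hx
  rw [← lintegral_indicator measurableSet_Ioi, ← lintegral_indicator measurableSet_Ioi]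
  simp_rw [hind]
  rw [← hemb.lintegral_map, Real.map_volume_mul_left hc.ne', lintegral_smul_measure,
    abs_of_pos (inv_pos.2 hc), smul_eq_mul]

/-- the scaling identity for Nielsen–Olesen profile functions.
For differentiable `f, g : (0,∞) → ℝ` and `c > 0`,
`E(a, b, λ)(r ↦ f(cr), r ↦ g(cr)) = E(c·a, b, λ/c²)(f, g)`. -/
theorem radialVortexEnergy_scaling
    (a b η lam : ℝ) (hlam : 0 ≤ lam)
    (f g : ℝ → ℝ)
    (hf : ∀ r ∈ Set.Ioi (0 : ℝ), DifferentiableAt ℝ f r)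
    (hg : ∀ r ∈ Set.Ioi (0 : ℝ), DifferentiableAt ℝ g r)
    (c : ℝ) (hc : 0 < c) :
    radialVortexEnergy η a b lam (fun r => f (c * r)) (fun r => g (c * r)) =
      radialVortexEnergy η (c * a) b (lam / c ^ 2) f g := by
  unfold radialVortexEnergy
  set G : ℝ → ENNReal := fun s =>
    ENNReal.ofReal c * (ENNReal.ofReal (((c * a) ^ 2 / (4 * s ^ 2)) * (deriv g s) ^ 2
      + (η ^ 2 / 2) * (deriv f s) ^ 2
      + (b ^ 2 / (2 * s ^ 2)) * (f s) ^ 2 * (1 + g s) ^ 2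
      + (lam / c ^ 2) * η ^ 4 * ((f s) ^ 2 - 1) ^ 2) * ENNReal.ofReal s) with hG
  have step1 : ∀ x ∈ Set.Ioi (0:ℝ),
      ENNReal.ofReal ((a ^ 2 / (4 * x ^ 2)) * (deriv (fun r => g (c * r)) x) ^ 2
        + (η ^ 2 / 2) * (deriv (fun r => f (c * r)) x) ^ 2
        + (b ^ 2 / (2 * x ^ 2)) * (f (c * x)) ^ 2 * (1 + g (c * x)) ^ 2
        + lam * η ^ 4 * ((f (c * x)) ^ 2 - 1) ^ 2) * ENNReal.ofReal x = G (c * x) := by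
    intro x hx
    have hx0 : (0:ℝ) < x := hx
    have hcx : c * x ∈ Set.Ioi (0:ℝ) := mul_pos hc hx0
    have hmul : HasDerivAt (fun y : ℝ => c * y) c x := by
      simpa using (hasDerivAt_id x).const_mul c
    have hdf : deriv (fun r => f (c * r)) x = deriv f (c * x) * c :=
      ((hf _ hcx).hasDerivAt.comp x hmul).deriv
    have hdg : deriv (fun r => g (c * r)) x = deriv g (c * x) * c :=
      ((hg _ hcx).hasDerivAt.comp x hmul).deriv
    rw [hdf, hdg, hG]
    have hBe : (a ^ 2 / (4 * x ^ 2)) * (deriv g (c * x) * c) ^ 2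
        + (η ^ 2 / 2) * (deriv f (c * x) * c) ^ 2
        + (b ^ 2 / (2 * x ^ 2)) * (f (c * x)) ^ 2 * (1 + g (c * x)) ^ 2
        + lam * η ^ 4 * ((f (c * x)) ^ 2 - 1) ^ 2
        = c ^ 2 * (((c * a) ^ 2 / (4 * (c * x) ^ 2)) * (deriv g (c * x)) ^ 2
          + (η ^ 2 / 2) * (deriv f (c * x)) ^ 2
          + (b ^ 2 / (2 * (c * x) ^ 2)) * (f (c * x)) ^ 2 * (1 + g (c * x)) ^ 2
          + (lam / c ^ 2) * η ^ 4 * ((f (c * x)) ^ 2 - 1) ^ 2) := by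
      field_simp
    rw [hBe, ENNReal.ofReal_mul (by positivity)]
    have hx' : ENNReal.ofReal x = ENNReal.ofReal c⁻¹ * ENNReal.ofReal (c * x) := by
      rw [← ENNReal.ofReal_mul (by positivity)]
      congr 1
      field_simp
    rw [hx']
    have hc2 : ENNReal.ofReal (c ^ 2) * ENNReal.ofReal c⁻¹ = ENNReal.ofReal c := by
      rw [← ENNReal.ofReal_mul (by positivity)]
      congr 1
      field_simp
    rw [show ∀ A B : ENNReal, ENNReal.ofReal (c^2) * A * (ENNReal.ofReal c⁻¹ * B) =
        (ENNReal.ofReal (c^2) * ENNReal.ofReal c⁻¹) * (A * B) from fun A B => by ring, hc2]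
  rw [setLIntegral_congr_fun measurableSet_Ioi step1,
    scale_key c hc G, hG]
  simp only
  rw [lintegral_const_mul' _ _ ENNReal.ofReal_ne_top, ← mul_assoc,
    ← ENNReal.ofReal_mul (by positivity), inv_mul_cancel₀ hc.ne', ENNReal.ofReal_one, one_mul]
end
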